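/- Let X be an integral locally noetherian space with big injective E_X. Then every nonzero uniform torsion-free object of Mod X has rank one. -/

import Mathlib

open CategoryTheory CategoryTheory.Limits

universe w v u

section Preliminaries

variable {C : Type u} [Category.{v} C]

/-- An object of a category is *noetherian* if its lattice of subobjects satisfies
the ascending chain condition. -/
def IsNoetherianObject (N : C) : Prop := WellFoundedGT (Subobject N)

/-- A Grothendieck category (non-commutative space) is *locally noetherian* if it has a
set of noetherian generators, i.e. a separating family of noetherian objects. -/
def LocallyNoetherian (C : Type u) [Category.{v} C] : Prop :=
  ∃ (ι : Type v) (G : ι → C), (∀ i, _root_.IsNoetherianObject (G i)) ∧ ObjectProperty.IsSeparating (.ofObj G)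

/-- `M` is a subquotient of `N`: a quotient of a subobject of `N`. -/
def IsSubquotient (N M : C) : Prop :=
  ∃ (S : Subobject N) (f : (S : C) ⟶ M), Epi f

end Preliminaries

/-- Any abelian category has finite biproducts. -/
instance (priority := 100) abelianHasFiniteBiproducts {C : Type u} [Category.{v} C]
    [Abelian C] : HasFiniteBiproducts C :=
  HasFiniteBiproducts.of_hasFiniteProducts

section BigInjective

variable {C : Type u} [Category.{v} C] [Abelian C] [HasColimits C] [AB5 C]

/-- `E` is the *big injective* making the locally noetherian space `X` (with `Mod X = C`)
an integral space: `E` is an indecomposable injective object whose endomorphism ring is a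
division ring, and every object is a subquotient of a coproduct of copies of `E`. -/
structure IsBigInjective (E : C) : Prop where
  injective : Injective E
  nonzero : ¬ IsZero E
  indecomposable : ∀ (A B : C), (E ≅ A ⊞ B) → IsZero A ∨ IsZero B
  division : ∀ f : E ⟶ E, f ≠ 0 → IsIso f
  generates : ∀ M : C, ∃ ι : Type v, IsSubquotient (∐ (fun _ : ι => E)) M

/-- An object `M` is *torsion* (with respect to the big injective `E`) if `Hom(M, E) = 0`. -/
def IsTorsion (E M : C) : Prop := ∀ f : M ⟶ E, f = 0

/-- An object `M` is *torsion-free* if its only torsion subobject is `0`. -/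
def IsTorsionFree (E M : C) : Prop := ∀ S : Subobject M, IsTorsion E (S : C) → S = ⊥

/-- The *rank* of `M`: the length of `Hom(M, E)` as a left module over the division ring
`End(E)`, expressed as the Krull dimension of its lattice of submodules. -/
noncomputable def rank (E M : C) : WithBot ℕ∞ :=
  Order.krullDim (Submodule (End E) (M ⟶ E))

/-- A subobject `L` of `M` is *essential* if every nonzero subobject of `M` meets it
nontrivially. -/
def IsEssentialSubobject {M : C} (L : Subobject M) : Prop :=
  ∀ S : Subobject M, S ≠ ⊥ → S ⊓ L ≠ ⊥

end BigInjective


/-! ### Auxiliary lemmas -/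

open ZeroObject

section ZeroAux

variable {C : Type u} [Category.{v} C] [Abelian C]

lemma isZero_of_mono_eq_zero {A B : C} (f : A ⟶ B) [Mono f] (h : f = 0) : IsZero A := by
  rw [IsZero.iff_id_eq_zero]
  have : 𝟙 A ≫ f = (0 : A ⟶ A) ≫ f := by simp [h]
  exact (cancel_mono f).mp this

lemma isZero_of_epi_eq_zero {A B : C} (f : A ⟶ B) [Epi f] (h : f = 0) : IsZero B := by
  rw [IsZero.iff_id_eq_zero]
  have : f ≫ 𝟙 B = f ≫ (0 : B ⟶ B) := by simp [h]
  exact (cancel_epi f).mp this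

lemma subobject_eq_bot_of_arrow_eq_zero {X : C} {P : Subobject X} (h : P.arrow = 0) :
    P = ⊥ := by
  refine le_antisymm (Subobject.le_of_comm 0 ?_) bot_le
  simp [h]

lemma isZero_coe_of_eq_bot {X : C} {P : Subobject X} (h : P = ⊥) : IsZero (P : C) := by
  rw [h]
  exact IsZero.of_iso (isZero_zero C) Subobject.botCoeIsoZero

lemma isZero_of_top_eq_bot {X : C} (h : (⊤ : Subobject X) = ⊥) : IsZero X := by
  have h1 := isZero_coe_of_eq_bot h
  have : IsIso ((⊤ : Subobject X).arrow) := inferInstance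
  exact IsZero.of_iso h1 (asIso ((⊤ : Subobject X).arrow)).symm

lemma subobject_eq_bot_of_isZero {X : C} {P : Subobject X} (h : IsZero (P : C)) : P = ⊥ :=
  subobject_eq_bot_of_arrow_eq_zero (h.eq_of_src _ _)

lemma mono_of_kernelSubobject_eq_bot {A B : C} (f : A ⟶ B)
    (h : kernelSubobject f = ⊥) : Mono f := by
  apply Abelian.mono_of_kernel_ι_eq_zero
  have h1 : IsZero (kernel f) :=
    IsZero.of_iso (isZero_coe_of_eq_bot h) (kernelSubobjectIso f).symm
  exact h1.eq_of_src _ _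

end ZeroAux

section KrullAux

lemma krullDim_eq_one_of_simple {α : Type*} [PartialOrder α] [BoundedOrder α]
    (hbt : (⊥ : α) ≠ ⊤) (hsimp : ∀ a : α, a = ⊥ ∨ a = ⊤) :
    Order.krullDim α = 1 := by
  apply le_antisymm
  · rw [Order.krullDim]
    apply iSup_le
    intro p
    have hp : p.length ≤ 1 := by
      by_contra hlen
      push_neg at hlen
      have h2 : 2 ≤ p.length := hlen
      have h01 : (⟨0, by omega⟩ : Fin (p.length + 1)) < ⟨1, by omega⟩ := by
        simp [Fin.lt_def]
      have h12 : (⟨1, by omega⟩ : Fin (p.length + 1)) < ⟨2, by omega⟩ := by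
        simp [Fin.lt_def]
      have hab := p.strictMono h01
      have hbc := p.strictMono h12
      rcases hsimp (p.toFun ⟨1, by omega⟩) with hb | hb
      · rw [hb] at hab; exact not_lt_bot hab
      · rw [hb] at hbc; exact not_top_lt hbc
    exact_mod_cast hp
  · have hlt : (⊥ : α) < ⊤ := le_top.lt_of_ne hbt
    let p : LTSeries α :=
      { length := 1
        toFun := ![⊥, ⊤]
        step := by
          intro i
          fin_cases i
          simpa using hlt }
    have := Order.LTSeries.length_le_krullDim p
    simpa [p] using this

end KrullAux

section TorsionAux
variable {C : Type u} [Category.{v} C] [Abelian C] [HasColimits C] [AB5 C]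

lemma isTorsionFree_of_mono (E : C) {U T : C} (u : U ⟶ T) [Mono u]
    (hT : IsTorsionFree E T) : IsTorsionFree E U := by
  intro S hS
  have hS' : IsTorsion E ((Subobject.mk (S.arrow ≫ u) : C)) := by
    intro f
    have h0 := hS ((Subobject.underlyingIso (S.arrow ≫ u)).inv ≫ f)
    calc f = (Subobject.underlyingIso (S.arrow ≫ u)).hom ≫
        ((Subobject.underlyingIso (S.arrow ≫ u)).inv ≫ f) := by simp
    _ = 0 := by rw [h0, comp_zero]
  have hbot := hT _ hS'
  have hz : IsZero ((Subobject.mk (S.arrow ≫ u) : C)) := isZero_coe_of_eq_bot hbot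
  have hzS : IsZero (S : C) :=
    IsZero.of_iso hz (Subobject.underlyingIso (S.arrow ≫ u)).symm
  exact subobject_eq_bot_of_isZero hzS

lemma hom_eq_zero_of_kills (E : C) (hInj : Injective E)
    (hDiv : ∀ f : E ⟶ E, f ≠ 0 → IsIso f) {B K : C} (b : B ⟶ E) [Mono b]
    (k : K ⟶ B) [Mono k] (hK : ¬ IsZero K) (f : B ⟶ E) (hkf : k ≫ f = 0) : f = 0 := by
  haveI := hInj
  have hfac : b ≫ Injective.factorThru f b = f := Injective.comp_factorThru f b
  set g := Injective.factorThru f b with hg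
  by_cases hg0 : g = 0
  · rw [← hfac, hg0, comp_zero]
  · haveI := hDiv g hg0
    exfalso; apply hK
    have h1 : (k ≫ b) ≫ g = 0 ≫ g := by
      rw [Category.assoc, hfac, hkf, zero_comp]
    have hkb : k ≫ b = 0 := by
      have := (cancel_mono g).mp h1
      simpa using this
    have hk0 : k = 0 := by
      have : k ≫ b = 0 ≫ b := by simpa using hkb
      exact (cancel_mono b).mp this
    exact isZero_of_mono_eq_zero k hk0

lemma exists_embed (E : C) (hInj : Injective E)
    (hDiv : ∀ f : E ⟶ E, f ≠ 0 → IsIso f) :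
    ∀ (n : ℕ) (B T : C) (b : B ⟶ ⨁ (fun _ : Fin n => E)) (e : B ⟶ T),
      Mono b → Epi e → ¬ IsZero T → IsTorsionFree E T →
      ∃ (U : C) (u : U ⟶ T) (j : U ⟶ E), Mono u ∧ Mono j ∧ ¬ IsZero U := by
  intro n
  induction n with
  | zero =>
    intro B T b e hb he hT0 _
    exfalso
    haveI := hb; haveI := he
    have hzero : IsZero (⨁ (fun _ : Fin 0 => E)) := by
      rw [IsZero.iff_id_eq_zero]
      apply biproduct.hom_ext
      intro j
      exact j.elim0
    have hZB : IsZero B := isZero_of_mono_eq_zero b (hzero.eq_of_tgt _ _)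
    exact hT0 (isZero_of_epi_eq_zero e (hZB.eq_of_src e 0))
  | succ n ih =>
    intro B T b e hb he hT0 hTf
    haveI := hb; haveI := he
    by_cases hA : kernel.ι (b ≫ biproduct.π (fun _ : Fin (n+1) => E) 0) ≫ e = 0
    · -- e factors through the coimage of b ≫ π₀, a subobject of E
      set q := b ≫ biproduct.π (fun _ : Fin (n+1) => E) 0 with hq
      set e' : Abelian.coimage q ⟶ T := cokernel.desc _ e hA with he'
      have hfac : Abelian.coimage.π q ≫ e' = e := by simp [he', Abelian.coimage.π]
      haveI hE' : Epi e' := epi_of_epi_fac hfac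
      by_cases hKz : IsZero (kernel e')
      · haveI : Mono e' := Abelian.mono_of_kernel_ι_eq_zero _ (hKz.eq_of_src _ _)
        haveI : IsIso e' := isIso_of_mono_of_epi e'
        refine ⟨Abelian.coimage q, e', Abelian.factorThruCoimage q, inferInstance,
          inferInstance, ?_⟩
        intro hz
        exact hT0 (IsZero.of_iso hz (asIso e').symm)
      · exfalso
        apply hT0
        apply isZero_of_top_eq_bot
        apply hTf
        intro f
        set g : T ⟶ E := inv ((⊤ : Subobject T).arrow) ≫ f with hgdef
        have hg0 : e' ≫ g = 0 := by
          apply hom_eq_zero_of_kills E hInj hDiv (Abelian.factorThruCoimage q)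
            (kernel.ι e') (hKz ∘ (by intro h; exact h)) (e' ≫ g)
          rw [← Category.assoc, kernel.condition, zero_comp]
        have hgz : g = 0 := by
          have : e' ≫ g = e' ≫ 0 := by simpa using hg0
          exact (cancel_epi e').mp this
        calc f = (⊤ : Subobject T).arrow ≫ g := by simp [hgdef]
        _ = 0 := by rw [hgz, comp_zero]
    · -- recurse on the kernel of b ≫ π₀
      set q := b ≫ biproduct.π (fun _ : Fin (n+1) => E) 0 with hq
      set A := kernel q with hAdef
      set kι : A ⟶ B := kernel.ι q with hkι
      set t : (⨁ (fun _ : Fin (n+1) => E)) ⟶ ⨁ (fun _ : Fin n => E) :=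
        biproduct.lift (fun i => biproduct.π _ i.succ) with ht
      have hb' : Mono (kι ≫ b ≫ t) := by
        apply Preadditive.mono_of_cancel_zero
        intro P z hz
        have hzb : z ≫ kι ≫ b = 0 := by
          apply biproduct.hom_ext
          intro j
          refine Fin.cases ?_ ?_ j
          · simp only [Category.assoc, zero_comp]
            rw [← hq, hkι, kernel.condition, comp_zero]
          · intro i
            have hts : t ≫ biproduct.π (fun _ : Fin n => E) i =
                biproduct.π (fun _ : Fin (n+1) => E) i.succ := by simp [ht]
            simp only [Category.assoc, zero_comp]
            rw [← hts]
            have h4 := congrArg (fun m => m ≫ biproduct.π (fun _ : Fin n => E) i) hz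
            simp only [Category.assoc, zero_comp] at h4
            exact h4
        have : z ≫ kι = 0 := by
          have : (z ≫ kι) ≫ b = 0 ≫ b := by simpa using hzb
          exact (cancel_mono b).mp this
        have : z ≫ kι = 0 ≫ kι := by simpa using this
        exact (cancel_mono kι).mp this
      set e₁ := Abelian.factorThruImage (kι ≫ e) with he₁
      have hT₁ : ¬ IsZero (Abelian.image (kι ≫ e)) := by
        intro hz
        apply hA
        have h0 : Abelian.factorThruImage (kι ≫ e) = 0 := hz.eq_of_tgt _ _
        calc kι ≫ e = Abelian.factorThruImage (kι ≫ e) ≫ Abelian.image.ι (kι ≫ e) :=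
              (Abelian.image.fac (kι ≫ e)).symm
        _ = 0 := by rw [h0, zero_comp]
      obtain ⟨U, u, j, hu, hj, hU⟩ := ih A (Abelian.image (kι ≫ e)) (kι ≫ b ≫ t) e₁
        hb' inferInstance hT₁ (isTorsionFree_of_mono E (Abelian.image.ι (kι ≫ e)) hTf)
      haveI := hu
      exact ⟨U, u ≫ Abelian.image.ι (kι ≫ e), j, mono_comp _ _, hj, hU⟩

end TorsionAux

section Stage

variable {C : Type u} [Category.{v} C] [Abelian C] [HasColimits C]
variable {ι : Type v} (E : C)

/-- inclusion of a finite subcoproduct -/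
noncomputable def stage (F : Finset ι) : (⨁ fun _ : ↥F => E) ⟶ ∐ (fun _ : ι => E) :=
  biproduct.desc fun j => Sigma.ι (fun _ : ι => E) (j : ι)

noncomputable def stageRetract (F : Finset ι) :
    (∐ fun _ : ι => E) ⟶ ⨁ fun _ : ↥F => E := by
  classical
  exact Sigma.desc fun i => if h : i ∈ F then biproduct.ι (fun _ : ↥F => E) ⟨i, h⟩ else 0

lemma stage_retract (F : Finset ι) : stage E F ≫ stageRetract E F = 𝟙 _ := by
  classical
  apply biproduct.hom_ext'
  intro j
  simp [stage, stageRetract]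

instance stage_mono (F : Finset ι) : Mono (stage (ι := ι) E F) :=
  have : IsSplitMono (stage (ι := ι) E F) :=
    IsSplitMono.mk' ⟨stageRetract E F, stage_retract E F⟩
  inferInstance

lemma ι_stage (F : Finset ι) (j : ↥F) :
    biproduct.ι (fun _ : ↥F => E) j ≫ stage E F = Sigma.ι (fun _ : ι => E) (j : ι) := by
  simp [stage]

lemma stage_comp_cokernel_π (F F' : Finset ι) (h : F ≤ F') :
    stage E F ≫ cokernel.π (stage (ι := ι) E F') = 0 := by
  apply biproduct.hom_ext'
  intro j
  have h1 : Sigma.ι (fun _ : ι => E) (j : ι) =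
      biproduct.ι (fun _ : ↥F' => E) ⟨(j : ι), h j.2⟩ ≫ stage E F' :=
    (ι_stage E F' ⟨(j : ι), h j.2⟩).symm
  rw [← Category.assoc, ι_stage, comp_zero, h1, Category.assoc, cokernel.condition,
    comp_zero]

/-- quotients of the coproduct by finite subcoproducts -/
@[reducible] noncomputable def Qf : Finset ι ⥤ C where
  obj F := cokernel (stage (ι := ι) E F)
  map {F F'} f := cokernel.desc _ (cokernel.π (stage E F'))
    (stage_comp_cokernel_π E F F' (leOfHom f))
  map_id F := by
    rw [← cancel_epi (cokernel.π (stage (ι := ι) E F))]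
    simp
  map_comp {F F' F''} f g := by
    rw [← cancel_epi (cokernel.π (stage (ι := ι) E F))]
    simp

lemma π_Qf_map (F F' : Finset ι) (f : F ⟶ F') :
    cokernel.π (stage E F) ≫ (Qf (ι := ι) E).map f = cokernel.π (stage E F') := by
  simp [Qf]

lemma Qf_cocone_app_eq_zero (t : Cocone (Qf (ι := ι) E)) (F : Finset ι) :
    t.ι.app F = 0 := by
  classical
  rw [← cancel_epi (cokernel.π (stage (ι := ι) E F)), comp_zero]
  have hs : ∀ (F' : Finset ι) (h : F ≤ F'),
      cokernel.π (stage E F) ≫ t.ι.app F =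
        cokernel.π (stage E F') ≫ t.ι.app F' := by
    intro F' h
    have := t.ι.naturality (homOfLE h)
    simp only [Functor.const_obj_obj, Functor.const_obj_map, Category.comp_id] at this
    rw [← this, ← Category.assoc, π_Qf_map E F F' (homOfLE h)]
  apply Sigma.hom_ext
  intro i
  have h2 : Sigma.ι (fun _ : ι => E) i ≫ cokernel.π (stage E (insert i F)) = 0 := by
    have h1 : Sigma.ι (fun _ : ι => E) i =
        biproduct.ι (fun _ : ↥(insert i F) => E) ⟨i, Finset.mem_insert_self i F⟩ ≫
          stage E (insert i F) :=
      (ι_stage E (insert i F) ⟨i, Finset.mem_insert_self i F⟩).symm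
    rw [h1, Category.assoc, cokernel.condition, comp_zero]
  calc Sigma.ι (fun _ : ι => E) i ≫ cokernel.π (stage E F) ≫ t.ι.app F
      = Sigma.ι (fun _ : ι => E) i ≫ cokernel.π (stage E (insert i F)) ≫
          t.ι.app (insert i F) := by rw [hs (insert i F) (Finset.subset_insert i F)]
    _ = (Sigma.ι (fun _ : ι => E) i ≫ cokernel.π (stage E (insert i F))) ≫
          t.ι.app (insert i F) := by rw [Category.assoc]
    _ = Sigma.ι (fun _ : ι => E) i ≫ 0 := by rw [h2, zero_comp, comp_zero]

noncomputable def QfZeroCocone : Cocone (Qf (ι := ι) E) where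
  pt := 0
  ι := { app := fun _ => 0, naturality := by intros; simp }

noncomputable def QfZeroCoconeIsColimit : IsColimit (QfZeroCocone (ι := ι) E) where
  desc t := 0
  fac t F := by
    rw [Qf_cocone_app_eq_zero E t F]
    simp [QfZeroCocone]
    exact zero_comp
  uniq t m h := (isZero_zero C).eq_of_src _ _

lemma isZero_colimit_Qf : IsZero (colimit (Qf (ι := ι) E)) :=
  IsZero.of_iso (isZero_zero C)
    ((colimit.isColimit _).coconePointUniqueUpToIso (QfZeroCoconeIsColimit E))

end Stage

section RPart

variable {C : Type u} [Category.{v} C] [Abelian C] [HasColimits C] [AB5 C]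
variable {ι : Type v} (E : C) {W : C} (w : W ⟶ ∐ (fun _ : ι => E))

lemma kernel_ι_comp_next (F F' : Finset ι) (f : F ⟶ F') :
    kernel.ι (w ≫ cokernel.π (stage E F)) ≫ (w ≫ cokernel.π (stage E F')) = 0 := by
  have h1 : w ≫ cokernel.π (stage E F') =
      (w ≫ cokernel.π (stage E F)) ≫ (Qf (ι := ι) E).map f := by
    rw [Category.assoc, π_Qf_map]
  rw [h1, ← Category.assoc]
  have h2 := kernel.condition (w ≫ cokernel.π (stage E F))
  rw [← Category.assoc] at h2
  rw [← Category.assoc, h2, zero_comp]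

/-- the quotients of `W` by the preimages of the finite stages -/
@[reducible] noncomputable def Rf : Finset ι ⥤ C where
  obj F := Abelian.coimage (w ≫ cokernel.π (stage E F))
  map {F F'} f := cokernel.desc _ (Abelian.coimage.π (w ≫ cokernel.π (stage E F')))
    (by
      have := kernel_ι_comp_next E w F F' f
      -- kernel.ι (w ≫ π F) factors through kernel (w ≫ π F')
      have hlift : kernel.ι (w ≫ cokernel.π (stage E F)) =
          kernel.lift _ _ this ≫ kernel.ι (w ≫ cokernel.π (stage E F')) := by
        rw [kernel.lift_ι]
      rw [hlift, Category.assoc, Abelian.coimage.π]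
      rw [cokernel.condition, comp_zero])
  map_id F := by
    rw [← cancel_epi (Abelian.coimage.π (w ≫ cokernel.π (stage (ι := ι) E F)))]
    simp [Abelian.coimage.π]
  map_comp {F F' F''} f g := by
    rw [← cancel_epi (Abelian.coimage.π (w ≫ cokernel.π (stage (ι := ι) E F)))]
    simp [Abelian.coimage.π]

lemma π_Rf_map (F F' : Finset ι) (f : F ⟶ F') :
    Abelian.coimage.π (w ≫ cokernel.π (stage E F)) ≫ (Rf (ι := ι) E w).map f =
      Abelian.coimage.π (w ≫ cokernel.π (stage E F')) := by
  simp [Rf, Abelian.coimage.π]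

/-- the natural injection of `Rf` into `Qf` -/
noncomputable def nuRQ : Rf (ι := ι) E w ⟶ Qf (ι := ι) E where
  app F := Abelian.factorThruCoimage (w ≫ cokernel.π (stage E F))
  naturality F F' f := by
    rw [← cancel_epi (Abelian.coimage.π (w ≫ cokernel.π (stage (ι := ι) E F)))]
    rw [← Category.assoc, π_Rf_map, Abelian.coimage.fac, ← Category.assoc]
    rw [Abelian.coimage.fac, Category.assoc, π_Qf_map]

instance nuRQ_mono : Mono (nuRQ (ι := ι) E w) := by
  haveI : ∀ F : Finset ι, Mono ((nuRQ (ι := ι) E w).app F) := by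
    intro F
    dsimp [nuRQ]
    infer_instance
  exact NatTrans.mono_of_mono_app _

lemma isZero_colimit_Rf : IsZero (colimit (Rf (ι := ι) E w)) := by
  have hQ : IsZero (colimit (Qf (ι := ι) E)) := isZero_colimit_Qf E
  have hmono : Mono (colimMap (nuRQ (ι := ι) E w)) := by
    have : colimMap (nuRQ (ι := ι) E w) = colim.map (nuRQ (ι := ι) E w) := rfl
    rw [this]
    infer_instance
  have h0 : colimMap (nuRQ (ι := ι) E w) = 0 := hQ.eq_of_tgt _ _
  rw [IsZero.iff_id_eq_zero]
  haveI := hmono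
  have : 𝟙 (colimit (Rf (ι := ι) E w)) ≫ colimMap (nuRQ (ι := ι) E w) =
      0 ≫ colimMap (nuRQ (ι := ι) E w) := by rw [h0, comp_zero, zero_comp]
  exact (cancel_mono _).mp this

lemma subobject_top_of_all_kernels_le (T : Subobject W)
    (hT : ∀ F : Finset ι, kernelSubobject (w ≫ cokernel.π (stage E F)) ≤ T) :
    T = ⊤ := by
  rw [← Subobject.isIso_arrow_iff_eq_top]
  have hepi : Epi T.arrow := by
    apply Abelian.epi_of_cokernel_π_eq_zero
    set g := cokernel.π T.arrow with hgdef
    have hg : ∀ F : Finset ι, kernel.ι (w ≫ cokernel.π (stage E F)) ≫ g = 0 := by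
      intro F
      have h1 : kernel.ι (w ≫ cokernel.π (stage E F)) =
          (kernelSubobjectIso (w ≫ cokernel.π (stage E F))).inv ≫
            (kernelSubobject (w ≫ cokernel.π (stage E F))).arrow := by
        rw [kernelSubobject_arrow']
      have h2 : (kernelSubobject (w ≫ cokernel.π (stage E F))).arrow =
          Subobject.ofLE _ T (hT F) ≫ T.arrow := by rw [Subobject.ofLE_arrow]
      rw [h1, h2, Category.assoc, Category.assoc, hgdef, cokernel.condition, comp_zero,
        comp_zero]
    -- build a cocone on Rf with apex cokernel T.arrow
    let cc : Cocone (Rf (ι := ι) E w) :=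
      { pt := cokernel T.arrow
        ι :=
          { app := fun F => cokernel.desc _ g (hg F)
            naturality := fun F F' f => by
              rw [← cancel_epi (Abelian.coimage.π (w ≫ cokernel.π (stage (ι := ι) E F)))]
              simp only [Functor.const_obj_obj, Functor.const_obj_map, Category.comp_id]
              rw [← Category.assoc, π_Rf_map E w F F' f]
              simp [Abelian.coimage.π] } }
    have hdesc : colimit.desc _ cc = 0 := (isZero_colimit_Rf E w).eq_of_src _ _
    have happ : cc.ι.app ∅ = 0 := by
      rw [← colimit.ι_desc cc ∅, hdesc, comp_zero]
    have : g = Abelian.coimage.π (w ≫ cokernel.π (stage E ∅)) ≫ cc.ι.app ∅ := by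
      simp [cc, Abelian.coimage.π]
    rw [this, happ, comp_zero]
  exact isIso_of_mono_of_epi T.arrow

lemma factor_thru_stage (hW : _root_.IsNoetherianObject W) :
    ∃ F : Finset ι, w ≫ cokernel.π (stage E F) = 0 := by
  classical
  have hwf : WellFounded ((· > ·) : Subobject W → Subobject W → Prop) := hW.wf
  obtain ⟨K₀, ⟨F₀, rfl⟩, hmax⟩ := hwf.has_min
    (Set.range fun F : Finset ι => kernelSubobject (w ≫ cokernel.π (stage E F)))
    ⟨_, ⟨∅, rfl⟩⟩
  have hmono : ∀ (F F' : Finset ι), F ≤ F' →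
      kernelSubobject (w ≫ cokernel.π (stage E F)) ≤
        kernelSubobject (w ≫ cokernel.π (stage E F')) := by
    intro F F' h
    apply Limits.le_kernelSubobject
    have h1 : w ≫ cokernel.π (stage E F') =
        (w ≫ cokernel.π (stage E F)) ≫ (Qf (ι := ι) E).map (homOfLE h) := by
      rw [Category.assoc, π_Qf_map]
    rw [h1, ← Category.assoc]
    rw [show (kernelSubobject (w ≫ cokernel.π (stage E F))).arrow ≫
        (w ≫ cokernel.π (stage E F)) = 0 from kernelSubobject_arrow_comp _]
    rw [zero_comp]
  have hK₀ : ∀ F : Finset ι, kernelSubobject (w ≫ cokernel.π (stage E F)) ≤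
      kernelSubobject (w ≫ cokernel.π (stage E F₀)) := by
    intro F
    have h1 := hmono F (F ∪ F₀) Finset.subset_union_left
    have h2 := hmono F₀ (F ∪ F₀) Finset.subset_union_right
    have h3 : kernelSubobject (w ≫ cokernel.π (stage E (F ∪ F₀))) =
        kernelSubobject (w ≫ cokernel.π (stage E F₀)) := by
      by_contra hne
      exact hmax _ ⟨F ∪ F₀, rfl⟩ (lt_of_le_of_ne h2 (Ne.symm hne))
    rw [← h3]
    exact h1
  have htop := subobject_top_of_all_kernels_le E w _ hK₀
  refine ⟨F₀, ?_⟩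
  have harr : Epi ((kernelSubobject (w ≫ cokernel.π (stage E F₀))).arrow) := by
    rw [htop]
    infer_instance
  have := kernelSubobject_arrow_comp (w ≫ cokernel.π (stage E F₀))
  rw [← cancel_epi ((kernelSubobject (w ≫ cokernel.π (stage E F₀))).arrow), comp_zero]
  exact this

end RPart


/-- Theorem 3.12(2). In an integral locally noetherian space with big
injective `E`, every nonzero uniform torsion-free object has rank one. -/
theorem statement5 {C : Type u} [Category.{v} C] [Abelian C] [HasColimits C] [AB5 C]
    (hX : LocallyNoetherian C) (E : C) (hE : IsBigInjective E)
    (M : C) (hM0 : ¬ IsZero M) (hMtf : IsTorsionFree E M)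
    (hMuniform : ∀ S T : Subobject M, S ≠ ⊥ → T ≠ ⊥ → S ⊓ T ≠ ⊥) :
    rank E M = (1 : ℕ∞) := by
  classical
  obtain ⟨ιG, G, hGnoeth, hGsep⟩ := hX
  haveI hInjE := hE.injective
  obtain ⟨ι, S, ρ, hρepi⟩ := hE.generates M
  haveI := hρepi
  have hρ0 : ρ ≠ 0 := fun h0 => hM0 (isZero_of_epi_eq_zero ρ h0)
  have hgen : ∃ (i : ιG) (h : G i ⟶ (S : C)), h ≫ ρ ≠ 0 := by
    by_contra hc
    push_neg at hc
    apply hρ0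
    apply hGsep ρ 0
    rintro _ ⟨i⟩ h
    rw [comp_zero]
    exact hc i h
  obtain ⟨i, h, hhρ⟩ := hgen
  obtain ⟨F₀, hF₀⟩ := factor_thru_stage E (h ≫ S.arrow) (hGnoeth i)
  set d : G i ⟶ ⨁ (fun _ : ↥F₀ => E) :=
    Abelian.monoLift (stage E F₀) (h ≫ S.arrow) hF₀ with hd
  have hdfac : d ≫ stage E F₀ = h ≫ S.arrow := Abelian.monoLift_comp _ _ _
  have hkd : kernel.ι d ≫ (h ≫ ρ) = 0 := by
    have h1 : (kernel.ι d ≫ h) ≫ S.arrow = 0 ≫ S.arrow := by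
      rw [zero_comp, Category.assoc, ← hdfac, ← Category.assoc, kernel.condition, zero_comp]
    have h2 : kernel.ι d ≫ h = 0 := (cancel_mono S.arrow).mp h1
    rw [← Category.assoc, h2, zero_comp]
  set tmap : Abelian.coimage d ⟶ M := cokernel.desc _ (h ≫ ρ) hkd with htm
  have htfac : Abelian.coimage.π d ≫ tmap = h ≫ ρ := by simp [htm, Abelian.coimage.π]
  have htmap0 : tmap ≠ 0 := by
    intro h0
    apply hhρ
    rw [← htfac, h0, comp_zero]
  set n := F₀.card with hn
  set eqv : ↥F₀ ≃ Fin n := F₀.equivFin with heqv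
  set biso : (⨁ fun _ : ↥F₀ => E) ≅ (⨁ fun _ : Fin n => E) :=
    biproduct.whiskerEquiv eqv (fun _ => Iso.refl E) with hbiso
  set b : Abelian.coimage d ⟶ ⨁ (fun _ : Fin n => E) :=
    Abelian.factorThruCoimage d ≫ biso.hom with hb
  haveI hbmono : Mono b := by rw [hb]; exact mono_comp _ _
  set T' := Abelian.image tmap with hT'
  have hT'0 : ¬ IsZero T' := by
    intro hz
    apply htmap0
    rw [← Abelian.image.fac tmap, hz.eq_of_tgt (Abelian.factorThruImage tmap) 0, zero_comp]
  have hT'f : IsTorsionFree E T' := isTorsionFree_of_mono E (Abelian.image.ι tmap) hMtf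
  obtain ⟨U, u, j, hu, hj, hU⟩ := exists_embed E hE.injective hE.division n
    (Abelian.coimage d) T' b (Abelian.factorThruImage tmap) hbmono inferInstance hT'0 hT'f
  haveI := hu; haveI := hj
  set uM : U ⟶ M := u ≫ Abelian.image.ι tmap with huM
  haveI huMm : Mono uM := by rw [huM]; exact mono_comp _ _
  set f : M ⟶ E := Injective.factorThru j uM with hf
  have hffac : uM ≫ f = j := Injective.comp_factorThru j uM
  have hUsub : Subobject.mk uM ≠ ⊥ := by
    intro heq
    have h0 : uM = 0 := (Subobject.mk_eq_bot_iff_zero).mp heq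
    exact hU (isZero_of_mono_eq_zero uM h0)
  have hkerf : kernelSubobject f = ⊥ := by
    by_contra hker
    have hP := hMuniform (kernelSubobject f) (Subobject.mk uM) hker hUsub
    apply hP
    set P := kernelSubobject f ⊓ Subobject.mk uM with hPdef
    have hle1 : P ≤ kernelSubobject f := inf_le_left
    have hle2 : P ≤ Subobject.mk uM := inf_le_right
    set ξ : (P : C) ⟶ U := Subobject.ofLEMk P uM hle2 with hξ
    have hξc : ξ ≫ uM = P.arrow := Subobject.ofLEMk_comp hle2
    have hPf : P.arrow ≫ f = 0 := by
      rw [← Subobject.ofLE_arrow hle1, Category.assoc, kernelSubobject_arrow_comp,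
        comp_zero]
    have hξj : ξ ≫ j = 0 := by
      rw [← hffac, ← Category.assoc, hξc, hPf]
    have hξ0 : ξ = 0 := zero_of_comp_mono j hξj
    apply subobject_eq_bot_of_arrow_eq_zero
    rw [← hξc, hξ0, zero_comp]
  haveI hfmono : Mono f := mono_of_kernelSubobject_eq_bot f hkerf
  have hf0 : f ≠ 0 := fun h0 => hM0 (isZero_of_mono_eq_zero f h0)
  unfold rank
  have hsimp : ∀ V : Submodule (End E) (M ⟶ E), V = ⊥ ∨ V = ⊤ := by
    intro V
    rcases eq_or_ne V ⊥ with hV | hV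
    · exact Or.inl hV
    · right
      obtain ⟨g, hgV, hg0⟩ := Submodule.exists_mem_ne_zero_of_ne_bot hV
      set φ : End E := Injective.factorThru g f with hφ
      have hgf : f ≫ φ = g := Injective.comp_factorThru g f
      have hφ0 : φ ≠ 0 := by intro h0; apply hg0; rw [← hgf, h0, comp_zero]
      haveI := hE.division φ hφ0
      have hfV : f ∈ V := by
        let ψ : End E := inv φ
        have hfg : f = ψ • g := by
          show f = g ≫ inv φ
          rw [← hgf, Category.assoc, IsIso.hom_inv_id, Category.comp_id]
        rw [hfg]
        exact V.smul_mem _ hgV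
      rw [eq_top_iff]
      intro m _
      let ψm : End E := Injective.factorThru m f
      have hm : m = ψm • f := by
        show m = f ≫ Injective.factorThru m f
        rw [Injective.comp_factorThru]
      rw [hm]
      exact V.smul_mem _ hfV
  have hbt : (⊥ : Submodule (End E) (M ⟶ E)) ≠ ⊤ := by
    intro hbt
    have hfmem : f ∈ (⊥ : Submodule (End E) (M ⟶ E)) := by rw [hbt]; trivial
    rw [Submodule.mem_bot] at hfmem
    exact hf0 hfmem
  have := krullDim_eq_one_of_simple hbt hsimp
  exact_mod_cast this
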